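/- arXiv:1611.06259 — 3 statements merged into one kernel-verified Lean document; each statement's English description precedes it below -/
import Mathlib

section
/- For every colored permutation w in Z_α ≀ S_n with last color 0, flag(w) + flag(r(w)) = α·(n−1), where r(w_1^{c_1}⋯w_n^{c_n}) = w_n^{c_n−c_1} ⋯ w_1^{0}. -/
open Finset Polynomial

/-- The `i`-th position (0-indexed) among the first `n-1` positions, as an element of `Fin n`. -/
def lo (n : ℕ) (i : Fin (n - 1)) : Fin n := ⟨i.val, by have := i.isLt; omega⟩

/-- The `(i+1)`-st position, as an element of `Fin n`. -/
def hi (n : ℕ) (i : Fin (n - 1)) : Fin n := ⟨i.val + 1, by have := i.isLt; omega⟩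

/-- The colored descent number `d(w)` of a colored permutation, given by the underlying
permutation `w` and the color vector `c`. -/
def cdes {n α : ℕ} (w : Equiv.Perm (Fin n)) (c : Fin n → ZMod α) : ℕ :=
  (univ.filter (fun i : Fin (n - 1) =>
    c (lo n i) ≠ c (hi n i) ∨ (c (lo n i) = c (hi n i) ∧ w (hi n i) < w (lo n i)))).card

/-- The flag descent statistic of a colored permutation. -/
def flagStat {n α : ℕ} (w : Equiv.Perm (Fin n)) (c : Fin n → ZMod α) : ℕ :=
  α * (univ.filter (fun i : Fin (n - 1) =>
        c (lo n i) = c (hi n i) ∧ w (hi n i) < w (lo n i))).card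
  + α * (univ.filter (fun i : Fin (n - 1) =>
        (c (lo n i)).val < (c (hi n i)).val)).card
  + (if h : 0 < n then (c ⟨0, h⟩).val else 0)

/-- The classical descent number of a permutation. -/
def des {n : ℕ} (w : Equiv.Perm (Fin n)) : ℕ :=
  (univ.filter (fun i : Fin (n - 1) => w (hi n i) < w (lo n i))).card

/-- The reversal of the underlying permutation (in one-line notation). -/
def rPerm {n : ℕ} (w : Equiv.Perm (Fin n)) : Equiv.Perm (Fin n) :=
  (Fin.revPerm : Equiv.Perm (Fin n)).trans w

/-- The reversed color vector with `c 0` subtracted from every color. -/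
def rCol {n α : ℕ} (c : Fin n → ZMod α) : Fin n → ZMod α :=
  fun i => c i.rev - (if h : 0 < n then c ⟨0, h⟩ else 0)

lemma zmod_sub_val {α : ℕ} [NeZero α] (x d : ZMod α) :
    (x - d).val = if d.val ≤ x.val then x.val - d.val else x.val + α - d.val := by
  have hx := ZMod.val_lt x
  have hd := ZMod.val_lt d
  have h1 : x - d = ((x.val + α - d.val : ℕ) : ZMod α) := by
    have hle : d.val ≤ x.val + α := by omega
    have e : ((x.val + α - d.val : ℕ) : ZMod α)
        = (x.val : ZMod α) + (α : ZMod α) - (d.val : ZMod α) := by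
      rw [Nat.cast_sub hle]; push_cast; ring
    rw [e, ZMod.natCast_rightInverse x, ZMod.natCast_rightInverse d, ZMod.natCast_self]
    ring
  rw [h1, ZMod.val_natCast]
  split_ifs with h
  · have e2 : x.val + α - d.val = (x.val - d.val) + α := by omega
    rw [e2, Nat.add_mod_right, Nat.mod_eq_of_lt (by omega)]
  · rw [Nat.mod_eq_of_lt (by omega)]

/-- For every colored permutation with last color `0`,
`flag(w) + flag(r(w)) = α⬝(n-1)`. -/
theorem flag_add_flag_r_eq (n α : ℕ) (hn : 0 < n) (hα : 0 < α)
    (w : Equiv.Perm (Fin n)) (c : Fin n → ZMod α) (hlast : c ⟨n - 1, by omega⟩ = 0) :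
    flagStat w c + flagStat (rPerm w) (rCol c) = α * (n - 1) := by
  haveI : NeZero α := ⟨hα.ne'⟩
  obtain ⟨d, hd⟩ : ∃ d : ZMod α, d = c ⟨0, hn⟩ := ⟨_, rfl⟩
  -- the "level" indicator
  obtain ⟨g, hg⟩ : ∃ g : Fin n → ℕ,
    g = fun k => if d.val ≤ (c k).val then 1 else 0 := ⟨_, rfl⟩
  obtain ⟨G, hG⟩ : ∃ G : ℕ → ℕ,
    G = fun k => if h : k < n then g ⟨k, h⟩ else 0 := ⟨_, rfl⟩
  -- basic rev facts
  have hrev1 : ∀ j : Fin (n-1), (lo n (Fin.rev j)).rev = hi n j := by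
    intro j; have := j.isLt; ext; simp [lo, hi, Fin.val_rev]; omega
  have hrev2 : ∀ j : Fin (n-1), (hi n (Fin.rev j)).rev = lo n j := by
    intro j; have := j.isLt; ext; simp [lo, hi, Fin.val_rev]; omega
  have hrev0 : (⟨0, hn⟩ : Fin n).rev = (⟨n - 1, by omega⟩ : Fin n) := by
    ext; simp [Fin.val_rev]
  -- abbreviate the four indicator functions
  obtain ⟨A, hA⟩ : ∃ A : Fin (n-1) → ℕ, A = fun j =>
    if c (lo n j) = c (hi n j) ∧ w (hi n j) < w (lo n j) then 1 else 0 := ⟨_, rfl⟩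
  obtain ⟨B, hB⟩ : ∃ B : Fin (n-1) → ℕ, B = fun j =>
    if (c (lo n j)).val < (c (hi n j)).val then 1 else 0 := ⟨_, rfl⟩
  obtain ⟨A', hA'⟩ : ∃ A' : Fin (n-1) → ℕ, A' = fun i =>
    if rCol c (lo n i) = rCol c (hi n i) ∧ rPerm w (hi n i) < rPerm w (lo n i) then 1 else 0 :=
    ⟨_, rfl⟩
  obtain ⟨B', hB'⟩ : ∃ B' : Fin (n-1) → ℕ, B' = fun i =>
    if (rCol c (lo n i)).val < (rCol c (hi n i)).val then 1 else 0 := ⟨_, rfl⟩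
  -- key pointwise identity
  have key : ∀ j : Fin (n-1),
      A j + B j + A' (Fin.rev j) + B' (Fin.rev j) + g (lo n j) = 1 + g (hi n j) := by
    intro j
    have hRA : rCol c (lo n (Fin.rev j)) = c (hi n j) - d := by
      rw [rCol, dif_pos hn, hrev1 j, hd]
    have hRB : rCol c (hi n (Fin.rev j)) = c (lo n j) - d := by
      rw [rCol, dif_pos hn, hrev2 j, hd]
    have hPA : rPerm w (lo n (Fin.rev j)) = w (hi n j) := by
      rw [rPerm]; simp [hrev1 j]
    have hPB : rPerm w (hi n (Fin.rev j)) = w (lo n j) := by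
      rw [rPerm]; simp [hrev2 j]
    have hlohi : lo n j ≠ hi n j := by
      simp [lo, hi, Fin.ext_iff]
    have hwne : w (hi n j) ≠ w (lo n j) := fun h => hlohi (w.injective h.symm)
    have hw : w (hi n j) < w (lo n j) ∨ w (lo n j) < w (hi n j) :=
      lt_or_gt_of_ne hwne
    have ha := ZMod.val_lt (c (lo n j))
    have hb := ZMod.val_lt (c (hi n j))
    have hdv := ZMod.val_lt d
    have hsa := zmod_sub_val (c (lo n j)) d
    have hsb := zmod_sub_val (c (hi n j)) d
    have hvi : c (lo n j) = c (hi n j) ↔ (c (lo n j)).val = (c (hi n j)).val := by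
      constructor
      · intro h; rw [h]
      · intro h
        rw [← ZMod.natCast_rightInverse (c (lo n j)),
          ← ZMod.natCast_rightInverse (c (hi n j)), h]
    simp only [hA, hB, hA', hB', hRA, hRB, hPA, hPB, hg, sub_left_inj]
    rcases eq_or_ne (c (lo n j)) (c (hi n j)) with h | h
    · rw [h]
      rcases hw with h1 | h1
      · simp [h1, lt_asymm h1]
      · simp [h1, lt_asymm h1]
    · have h2 : c (hi n j) ≠ c (lo n j) := h.symm
      have h3 : (c (lo n j)).val ≠ (c (hi n j)).val := fun hv => h (hvi.mpr hv)
      simp only [h, h2, false_and, if_false, hsa, hsb]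
      split_ifs <;> omega
  -- sum the key identity
  have sumkey : (∑ j : Fin (n-1), A j) + (∑ j : Fin (n-1), B j)
      + (∑ j : Fin (n-1), A' (Fin.rev j)) + (∑ j : Fin (n-1), B' (Fin.rev j))
      + (∑ j : Fin (n-1), g (lo n j)) = (n - 1) + ∑ j : Fin (n-1), g (hi n j) := by
    have e1 : ∑ j : Fin (n-1), (A j + B j + A' (Fin.rev j) + B' (Fin.rev j) + g (lo n j))
        = ∑ j : Fin (n-1), (1 + g (hi n j)) := Finset.sum_congr rfl fun j _ => key j
    simp only [Finset.sum_add_distrib, Finset.sum_const, card_univ, Fintype.card_fin,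
      smul_eq_mul, mul_one] at e1
    omega
  -- telescoping
  have hGlo : ∀ j : Fin (n-1), g (lo n j) = G j.val := by
    intro j
    have : (j : ℕ) < n := by have := j.isLt; omega
    rw [hG]; simp only [this, dif_pos]; rfl
  have hGhi : ∀ j : Fin (n-1), g (hi n j) = G (j.val + 1) := by
    intro j
    have : (j : ℕ) + 1 < n := by have := j.isLt; omega
    rw [hG]; simp only [this, dif_pos]; rfl
  have tlo : ∑ j : Fin (n-1), g (lo n j) = ∑ k ∈ Finset.range (n-1), G k := by
    rw [Finset.sum_congr rfl fun j _ => hGlo j]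
    exact Fin.sum_univ_eq_sum_range G (n-1)
  have thi : ∑ j : Fin (n-1), g (hi n j) = ∑ k ∈ Finset.range (n-1), G (k + 1) := by
    rw [Finset.sum_congr rfl fun j _ => hGhi j]
    exact Fin.sum_univ_eq_sum_range (fun k => G (k+1)) (n-1)
  have tel : (∑ k ∈ Finset.range (n-1), G k) + G (n-1)
      = (∑ k ∈ Finset.range (n-1), G (k + 1)) + G 0 := by
    have h1 : (∑ k ∈ Finset.range (n-1), G k) + G (n-1)
        = ∑ k ∈ Finset.range n, G k := by
      rw [← Finset.sum_range_succ G (n-1)]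
      congr 2
      omega
    have h2 : ∑ k ∈ Finset.range n, G k
        = (∑ k ∈ Finset.range (n-1), G (k + 1)) + G 0 := by
      have hn' : n = (n-1) + 1 := by omega
      rw [hn', Finset.sum_range_succ' G (n-1), Nat.add_sub_cancel]
    rw [h1, h2]
  have hG0 : G 0 = 1 := by
    rw [hG]; simp only [hn, dif_pos]; rw [hg]
    simp only [← hd]
    simp
  have hGn1 : G (n-1) = if d = 0 then 1 else 0 := by
    have h1 : n - 1 < n := by omega
    rw [hG]; simp only [h1, dif_pos]; rw [hg]
    simp only [hlast, ZMod.val_zero, Nat.le_zero, ZMod.val_eq_zero]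
  -- total of the four sums
  have total : (∑ j : Fin (n-1), A j) + (∑ j : Fin (n-1), B j)
      + (∑ j : Fin (n-1), A' (Fin.rev j)) + (∑ j : Fin (n-1), B' (Fin.rev j)) + 1
      = (n - 1) + (if d = 0 then 1 else 0) := by
    rw [tlo, thi] at sumkey
    rw [← hGn1]
    clear * - sumkey tel hG0
    omega
  -- reindex the primed sums
  have rA : ∑ j : Fin (n-1), A' (Fin.rev j) = ∑ i : Fin (n-1), A' i := by
    have := Equiv.sum_comp (Fin.revPerm : Equiv.Perm (Fin (n-1))) A'
    simpa using this
  have rB : ∑ j : Fin (n-1), B' (Fin.rev j) = ∑ i : Fin (n-1), B' i := by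
    have := Equiv.sum_comp (Fin.revPerm : Equiv.Perm (Fin (n-1))) B'
    simpa using this
  -- express flagStat via the sums
  have cardA : (univ.filter (fun i : Fin (n - 1) =>
      c (lo n i) = c (hi n i) ∧ w (hi n i) < w (lo n i))).card = ∑ j : Fin (n-1), A j := by
    rw [hA, Finset.card_filter]
  have cardB : (univ.filter (fun i : Fin (n - 1) =>
      (c (lo n i)).val < (c (hi n i)).val)).card = ∑ j : Fin (n-1), B j := by
    rw [hB, Finset.card_filter]
  have cardA' : (univ.filter (fun i : Fin (n - 1) =>
      rCol c (lo n i) = rCol c (hi n i) ∧ rPerm w (hi n i) < rPerm w (lo n i))).card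
      = ∑ i : Fin (n-1), A' i := by
    rw [hA', Finset.card_filter]
  have cardB' : (univ.filter (fun i : Fin (n - 1) =>
      (rCol c (lo n i)).val < (rCol c (hi n i)).val)).card
      = ∑ i : Fin (n-1), B' i := by
    rw [hB', Finset.card_filter]
  have hrc0 : rCol c ⟨0, hn⟩ = -d := by
    rw [rCol, dif_pos hn, hrev0, hlast, ← hd]
    ring
  have expand : flagStat w c + flagStat (rPerm w) (rCol c)
      = α * ((∑ j : Fin (n-1), A j) + (∑ j : Fin (n-1), B j)
          + (∑ i : Fin (n-1), A' i) + (∑ i : Fin (n-1), B' i))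
        + (d.val + (-d).val) := by
    rw [flagStat, flagStat, dif_pos hn, dif_pos hn, cardA, cardB, cardA', cardB',
      hrc0, ← hd]
    ring
  rw [expand]
  rw [rA, rB] at total
  obtain ⟨S, hS⟩ : ∃ S : ℕ, S = (∑ j : Fin (n-1), A j) + (∑ j : Fin (n-1), B j)
      + (∑ i : Fin (n-1), A' i) + (∑ i : Fin (n-1), B' i) := ⟨_, rfl⟩
  rw [← hS] at total ⊢
  rcases eq_or_ne d 0 with h0 | h0
  · rw [h0] at total ⊢
    norm_num at total
    rw [neg_zero, ZMod.val_zero]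
    have hT : S = n - 1 := by omega
    rw [hT]
    ring
  · rw [if_neg h0] at total
    have hdv1 : d.val ≠ 0 := fun h => h0 ((ZMod.val_eq_zero d).mp h)
    have hdvlt := ZMod.val_lt d
    have hneg : (-d).val = α - d.val := by rw [ZMod.neg_val, if_neg h0]
    have hsum : d.val + (-d).val = α := by omega
    have hT : S + 1 = n - 1 := by omega
    rw [hsum, ← hT, mul_add, mul_one]
end

section
/- Let (c_1,…,c_n) be a sequence in Z_α with c_n = 0, c_1 ≠ 0, and c_i ≠ c_{i+1} for all i ∈ {1,…,n−1}. Then |{ i : c_i < c_{i+1} }| + |{ i : c_{i+1} − c_1 < c_i − c_1 }| = n − 2, where comparisons use the linear order 0 < 1 < ⋯ < α−1 on Z_α and subtraction is in Z_α. -/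
open Finset Polynomial

lemma zmod_val_sub' {α : ℕ} [NeZero α] (x t : ZMod α) :
    (x - t).val = if t.val ≤ x.val then x.val - t.val else x.val + α - t.val := by
  split_ifs with h
  · exact ZMod.val_sub h
  · have hx := ZMod.val_lt x
    have ht := ZMod.val_lt t
    have : x - t = ((x.val + α - t.val : ℕ) : ZMod α) := by
      push_cast [Nat.cast_sub (by omega : t.val ≤ x.val + α)]
      simp [ZMod.natCast_val, ZMod.cast_id]
    rw [this, ZMod.val_natCast, Nat.mod_eq_of_lt (by omega)]

/-- For a color sequence in `Z_α` with `c_n = 0`, `c_1 ≠ 0`, and no two adjacent colors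
equal, `|{i : c_i < c_{i+1}}| + |{i : c_{i+1} - c_1 < c_i - c_1}| = n - 2`. -/
theorem ascents_add_shifted_descents_eq (n α : ℕ) (hn : 2 ≤ n) (hα : 2 ≤ α)
    (c : Fin n → ZMod α) (hlast : c ⟨n - 1, by omega⟩ = 0)
    (hfirst : c ⟨0, by omega⟩ ≠ 0)
    (hadj : ∀ i : Fin (n - 1), c (lo n i) ≠ c (hi n i)) :
    (univ.filter (fun i : Fin (n - 1) =>
        (c (lo n i)).val < (c (hi n i)).val)).card
      + (univ.filter (fun i : Fin (n - 1) =>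
        (c (hi n i) - c ⟨0, by omega⟩).val < (c (lo n i) - c ⟨0, by omega⟩).val)).card
      = n - 2 := by
  have hαne : NeZero α := ⟨by omega⟩
  set t : ZMod α := c ⟨0, by omega⟩ with ht
  -- indicator function
  set g : Fin n → ℤ := fun j => if t.val ≤ (c j).val then 1 else 0 with hg
  have key : ∀ i : Fin (n - 1),
      (if (c (lo n i)).val < (c (hi n i)).val then (1 : ℤ) else 0)
      + (if (c (hi n i) - t).val < (c (lo n i) - t).val then (1 : ℤ) else 0)
      = 1 + g (hi n i) - g (lo n i) := by
    intro i
    have hne : (c (lo n i)).val ≠ (c (hi n i)).val :=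
      fun h => hadj i (ZMod.val_injective α h)
    have h1 := ZMod.val_lt (c (lo n i))
    have h2 := ZMod.val_lt (c (hi n i))
    have h3 := ZMod.val_lt t
    rw [zmod_val_sub', zmod_val_sub']
    simp only [hg]
    split_ifs <;> omega
  have hsum : ((univ.filter (fun i : Fin (n - 1) =>
        (c (lo n i)).val < (c (hi n i)).val)).card : ℤ)
      + ((univ.filter (fun i : Fin (n - 1) =>
        (c (hi n i) - t).val < (c (lo n i) - t).val)).card : ℤ)
      = ∑ i : Fin (n - 1), (1 + g (hi n i) - g (lo n i)) := by
    rw [← Finset.sum_boole, ← Finset.sum_boole, ← Finset.sum_add_distrib]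
    exact Finset.sum_congr rfl fun i _ => key i
  -- telescoping
  set G : ℕ → ℤ := fun k => if h : k < n then g ⟨k, h⟩ else 0 with hG
  have htel : ∑ i : Fin (n - 1), (1 + g (hi n i) - g (lo n i))
      = (n - 1 : ℕ) + (G (n - 1) - G 0) := by
    have : ∀ i : Fin (n - 1), (1 + g (hi n i) - g (lo n i))
        = 1 + (G (i.val + 1) - G i.val) := by
      intro i
      have h1 : (i.val : ℕ) + 1 < n := by have := i.isLt; omega
      have h0 : (i.val : ℕ) < n := by omega
      simp only [hG, dif_pos h1, dif_pos h0, lo, hi]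
      ring
    rw [Finset.sum_congr rfl fun i _ => this i, Finset.sum_add_distrib,
      Finset.sum_const, Finset.card_univ, Fintype.card_fin,
      Fin.sum_univ_eq_sum_range (fun k => G (k + 1) - G k), Finset.sum_range_sub]
    simp
  have hG0 : G 0 = 1 := by
    simp only [hG, hg, dif_pos (by omega : 0 < n)]
    rw [if_pos le_rfl]
  have hGlast : G (n - 1) = 0 := by
    have hlt : n - 1 < n := by omega
    have htne : t.val ≠ 0 := fun h => hfirst ((ZMod.val_eq_zero t).mp h)
    simp only [hG, hg, dif_pos hlt]
    rw [if_neg]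
    rw [show (⟨n - 1, hlt⟩ : Fin n) = ⟨n - 1, by omega⟩ from rfl, hlast]
    simp only [ZMod.val_zero]
    omega
  rw [hG0, hGlast] at htel
  rw [htel] at hsum
  have hcast : ((n : ℤ) - 1) = ((n - 1 : ℕ) : ℤ) := by omega
  omega
end

section
/- For n = 2k+1 odd, the flag descent polynomial over the quotient satisfies F_{2k+1}^2(x) = (1+x)^{2k} · A_{2k+1}(x), where F_n^2(x) = Σ x^{flag(w)} over signed permutations w ∈ Z_2 ≀ S_n with last color 0, and A_n(x) is the classical Eulerian polynomial. (Verify this for k = 1: F_3^2(x) = (1+x)^2 (1 + 4x + x^2).) -/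
open Finset Polynomial

/- ### Auxiliary material -/

/-- Colors from a change vector `b`: `c j = b j + b (j+1) + ⋯ + b (m-1)`. -/
def cofb {m : ℕ} (b : Fin m → ZMod 2) : Fin (m + 1) → ZMod 2 :=
  fun j => ∑ t : Fin m, if j.val ≤ t.val then b t else 0

lemma cofb_last {m : ℕ} (b : Fin m → ZMod 2) : cofb b ⟨m, Nat.lt_succ_self m⟩ = 0 := by
  apply Finset.sum_eq_zero
  intro t _
  rw [if_neg]
  show ¬ m ≤ t.val
  omega

lemma cofb_succ {m : ℕ} (b : Fin m → ZMod 2) (i : Fin m) :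
    cofb b (lo (m + 1) i) = b i + cofb b (hi (m + 1) i) := by
  unfold cofb lo hi
  have key : ∀ t : Fin m, (if i.val ≤ t.val then b t else 0)
      = (if t = i then b t else 0) + (if i.val + 1 ≤ t.val then b t else 0) := by
    intro t
    by_cases ht : t = i
    · subst ht; rw [if_pos le_rfl, if_pos rfl, if_neg (by omega)]; simp
    · have hv : t.val ≠ i.val := fun h => ht (Fin.ext h)
      rw [if_neg ht]
      by_cases h2 : i.val ≤ t.val
      · rw [if_pos h2, if_pos (by omega)]; simp
      · rw [if_neg h2, if_neg (by omega)]; simp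
  rw [Finset.sum_congr rfl (fun t _ => key t), Finset.sum_add_distrib,
    Finset.sum_ite_eq' Finset.univ i b]
  simp

/-- Change vector from a color vector. -/
def bofc {m : ℕ} (c : Fin (m + 1) → ZMod 2) : Fin m → ZMod 2 :=
  fun i => c (lo (m + 1) i) - c (hi (m + 1) i)

lemma bofc_cofb {m : ℕ} (b : Fin m → ZMod 2) : bofc (cofb b) = b := by
  funext i
  unfold bofc
  rw [cofb_succ]
  exact add_sub_cancel_right _ _

lemma cofb_bofc {m : ℕ} (c : Fin (m + 1) → ZMod 2) (hc : c ⟨m, Nat.lt_succ_self m⟩ = 0) :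
    cofb (bofc c) = c := by
  funext j
  unfold cofb bofc lo hi
  set f : ℕ → ZMod 2 := fun t => if h : t < m + 1 then c ⟨t, h⟩ else 0 with hf
  have hstep : ∀ t : Fin m,
      (if j.val ≤ t.val then c ⟨t.val, by omega⟩ - c ⟨t.val + 1, by omega⟩ else 0)
      = (fun t : ℕ => if j.val ≤ t then f t - f (t + 1) else 0) t.val := by
    intro t
    have h1 : t.val < m + 1 := by omega
    have h2 : t.val + 1 < m + 1 := by omega
    simp only [hf, dif_pos h1, dif_pos h2]
  rw [Finset.sum_congr rfl (fun t _ => hstep t),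
    Fin.sum_univ_eq_sum_range (fun t : ℕ => if j.val ≤ t then f t - f (t + 1) else 0) m,
    ← Finset.sum_filter]
  have hfil : (Finset.range m).filter (fun t => j.val ≤ t) = Finset.Ico j.val m := by
    ext t; simp [Finset.mem_range, Finset.mem_Ico, and_comm]
  have hjm : j.val ≤ m := by omega
  rw [hfil, Finset.sum_Ico_eq_sub _ hjm, Finset.sum_range_sub' f m, Finset.sum_range_sub' f j.val]
  have hfm : f m = 0 := by
    simp only [hf, dif_pos (Nat.lt_succ_self m)]
    exact hc
  have hfj : f j.val = c j := by
    simp only [hf, dif_pos j.isLt]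
  rw [hfm, hfj]
  ring

lemma zmod2_ne_iff_val (v u : ZMod 2) : v ≠ u ↔ v.val ≠ u.val := by
  constructor
  · intro h h2; exact h (ZMod.val_injective 2 h2)
  · intro h h2; exact h (by rw [h2])

/-- Telescoping identity: twice the number of color ascents plus the first color equals the
number of color changes, provided the last color is `0`. -/
lemma color_count {m : ℕ} (c : Fin (m + 1) → ZMod 2) (hc : c ⟨m, Nat.lt_succ_self m⟩ = 0) :
    2 * (univ.filter (fun i : Fin m =>
          (c (lo (m + 1) i)).val < (c (hi (m + 1) i)).val)).card
      + (c ⟨0, Nat.succ_pos m⟩).val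
    = (univ.filter (fun i : Fin m => c (lo (m + 1) i) ≠ c (hi (m + 1) i))).card := by
  have tel : ∑ i : Fin m, (((c (hi (m + 1) i)).val : ℤ) - ((c (lo (m + 1) i)).val : ℤ))
      = -((c ⟨0, Nat.succ_pos m⟩).val : ℤ) := by
    set f : ℕ → ℤ := fun t => if h : t < m + 1 then ((c ⟨t, h⟩).val : ℤ) else 0 with hf
    have hstep : ∀ t : Fin m,
        (((c (hi (m + 1) t)).val : ℤ) - ((c (lo (m + 1) t)).val : ℤ))
        = (fun t : ℕ => f (t + 1) - f t) t.val := by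
      intro t
      have h1 : t.val < m + 1 := by omega
      have h2 : t.val + 1 < m + 1 := by omega
      simp only [hf, dif_pos h1, dif_pos h2, lo, hi]
    rw [Finset.sum_congr rfl (fun t _ => hstep t),
      Fin.sum_univ_eq_sum_range (fun t : ℕ => f (t + 1) - f t) m,
      Finset.sum_range_sub f m]
    have hfm : f m = 0 := by
      simp only [hf, dif_pos (Nat.lt_succ_self m)]
      rw [hc]; rfl
    have hf0 : f 0 = ((c ⟨0, Nat.succ_pos m⟩).val : ℤ) := by
      simp only [hf, dif_pos (Nat.succ_pos m)]
    rw [hfm, hf0]; ring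
  have pt : ∀ i : Fin m, (2 : ℤ) * (if (c (lo (m + 1) i)).val < (c (hi (m + 1) i)).val then 1 else 0)
      = (((c (hi (m + 1) i)).val : ℤ) - ((c (lo (m + 1) i)).val : ℤ))
        + (if c (lo (m + 1) i) ≠ c (hi (m + 1) i) then 1 else 0) := by
    intro i
    have h1 : (c (lo (m + 1) i)).val < 2 := ZMod.val_lt _
    have h2 : (c (hi (m + 1) i)).val < 2 := ZMod.val_lt _
    rw [if_congr (zmod2_ne_iff_val _ _) rfl rfl]
    split_ifs <;> omega
  have hZ : (2 * ((univ.filter (fun i : Fin m =>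
          (c (lo (m + 1) i)).val < (c (hi (m + 1) i)).val)).card : ℤ)
      + ((c ⟨0, Nat.succ_pos m⟩).val : ℤ))
      = ((univ.filter (fun i : Fin m =>
          c (lo (m + 1) i) ≠ c (hi (m + 1) i))).card : ℤ) := by
    rw [Finset.card_filter, Finset.card_filter]
    push_cast
    rw [Finset.mul_sum, Finset.sum_congr rfl (fun i _ => pt i), Finset.sum_add_distrib, tel]
    ring
  exact_mod_cast hZ

lemma flagStat_cofb {m : ℕ} (w : Equiv.Perm (Fin (m + 1))) (b : Fin m → ZMod 2) :
    flagStat w (cofb b)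
      = ∑ i : Fin m,
          (if b i = 0 then (if w (hi (m + 1) i) < w (lo (m + 1) i) then 2 else 0) else 1) := by
  have h0 : flagStat w (cofb b)
      = 2 * (univ.filter (fun i : Fin m =>
            cofb b (lo (m + 1) i) = cofb b (hi (m + 1) i)
              ∧ w (hi (m + 1) i) < w (lo (m + 1) i))).card
        + 2 * (univ.filter (fun i : Fin m =>
            (cofb b (lo (m + 1) i)).val < (cofb b (hi (m + 1) i)).val)).card
        + (cofb b ⟨0, Nat.succ_pos m⟩).val := by
    unfold flagStat
    rw [dif_pos (Nat.succ_pos m)]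
    rfl
  have hb : ∀ i : Fin m, (cofb b (lo (m + 1) i) = cofb b (hi (m + 1) i)) ↔ b i = 0 := by
    intro i
    rw [cofb_succ]
    exact add_eq_right
  rw [h0, add_assoc, color_count (cofb b) (cofb_last b)]
  have hA : (univ.filter (fun i : Fin m =>
        cofb b (lo (m + 1) i) = cofb b (hi (m + 1) i) ∧ w (hi (m + 1) i) < w (lo (m + 1) i)))
      = (univ.filter (fun i : Fin m =>
        b i = 0 ∧ w (hi (m + 1) i) < w (lo (m + 1) i))) := by
    apply Finset.filter_congr
    intro i _
    rw [hb i]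
  have hC : (univ.filter (fun i : Fin m =>
        cofb b (lo (m + 1) i) ≠ cofb b (hi (m + 1) i)))
      = (univ.filter (fun i : Fin m => b i ≠ 0)) := by
    apply Finset.filter_congr
    intro i _
    rw [ne_eq, ne_eq, hb i]
  rw [hA, hC, Finset.card_filter, Finset.card_filter, Finset.mul_sum, ← Finset.sum_add_distrib]
  apply Finset.sum_congr rfl
  intro i _
  by_cases h0 : b i = 0
  · by_cases hd : w (hi (m + 1) i) < w (lo (m + 1) i) <;> simp [h0, hd]
  · simp [h0]

lemma innerSumAux {m : ℕ} (w : Equiv.Perm (Fin (m + 1))) :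
    (∑ c ∈ univ.filter (fun c : Fin (m + 1) → ZMod 2 => c ⟨m, Nat.lt_succ_self m⟩ = 0),
        (X : Polynomial ℤ) ^ flagStat w c)
      = (1 + X) ^ m * (X : Polynomial ℤ) ^ des w := by
  have h1 : (∑ c ∈ univ.filter (fun c : Fin (m + 1) → ZMod 2 => c ⟨m, Nat.lt_succ_self m⟩ = 0),
        (X : Polynomial ℤ) ^ flagStat w c)
      = ∑ b : Fin m → ZMod 2, (X : Polynomial ℤ) ^ flagStat w (cofb b) := by
    refine Finset.sum_nbij' bofc cofb ?_ ?_ ?_ ?_ ?_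
    · intro c _; exact Finset.mem_univ _
    · intro b _
      rw [Finset.mem_filter]
      exact ⟨Finset.mem_univ _, cofb_last b⟩
    · intro c hc
      rw [Finset.mem_filter] at hc
      exact cofb_bofc c hc.2
    · intro b _; exact bofc_cofb b
    · intro c hc
      rw [Finset.mem_filter] at hc
      rw [cofb_bofc c hc.2]
  have h2 : ∀ b : Fin m → ZMod 2, (X : Polynomial ℤ) ^ flagStat w (cofb b)
      = ∏ i : Fin m, (X : Polynomial ℤ) ^
          (if b i = 0 then (if w (hi (m + 1) i) < w (lo (m + 1) i) then 2 else 0) else 1) := by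
    intro b
    rw [flagStat_cofb, Finset.prod_pow_eq_pow_sum]
  rw [h1, Finset.sum_congr rfl (fun b _ => h2 b)]
  have h3 : (∑ b : Fin m → ZMod 2, ∏ i : Fin m, (X : Polynomial ℤ) ^
        (if b i = 0 then (if w (hi (m + 1) i) < w (lo (m + 1) i) then 2 else 0) else 1))
      = ∏ i : Fin m, ∑ v : ZMod 2, (X : Polynomial ℤ) ^
        (if v = 0 then (if w (hi (m + 1) i) < w (lo (m + 1) i) then 2 else 0) else 1) := by
    rw [Finset.prod_univ_sum (fun _ : Fin m => (univ : Finset (ZMod 2)))]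
    rw [Fintype.piFinset_univ]
  rw [h3]
  have h4 : ∀ i : Fin m, (∑ v : ZMod 2, (X : Polynomial ℤ) ^
        (if v = 0 then (if w (hi (m + 1) i) < w (lo (m + 1) i) then 2 else 0) else 1))
      = (1 + X) * X ^ (if w (hi (m + 1) i) < w (lo (m + 1) i) then 1 else 0) := by
    intro i
    have hsum : ∀ f : ZMod 2 → Polynomial ℤ, ∑ v : ZMod 2, f v = f 0 + f 1 := by
      intro f
      have hx2 : ∀ x : ZMod 2, x = 0 ∨ x = 1 := by decide
      exact Fintype.sum_eq_add 0 1 (by decide) (fun x hx => ((hx2 x).elim hx.1 hx.2).elim)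
    rw [hsum]
    rw [if_pos rfl, if_neg (by decide : ¬ (1 : ZMod 2) = 0)]
    by_cases hd : w (hi (m + 1) i) < w (lo (m + 1) i) <;> simp [hd] <;> ring
  rw [Finset.prod_congr rfl (fun i _ => h4 i), Finset.prod_mul_distrib, Finset.prod_const,
    Finset.prod_pow_eq_pow_sum, Finset.card_univ, Fintype.card_fin]
  congr 1
  have hdes : des w = ∑ i : Fin m,
      (if w (hi (m + 1) i) < w (lo (m + 1) i) then 1 else 0) :=
    Finset.card_filter _ _
  rw [hdes]

/-- For odd `n = 2k+1`, the flag descent polynomial over signed permutations with last color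
`0` factors as `F_{2k+1}^2(x) = (1+x)^{2k} ⬝ A_{2k+1}(x)`. -/
theorem flag_polynomial_factorization_odd_signed (k : ℕ) :
    (∑ w : Equiv.Perm (Fin (2 * k + 1)),
        ∑ c ∈ univ.filter (fun c : Fin (2 * k + 1) → ZMod 2 => c ⟨2 * k, by omega⟩ = 0),
          (X : Polynomial ℤ) ^ flagStat w c)
      = (1 + X) ^ (2 * k) *
          ∑ w : Equiv.Perm (Fin (2 * k + 1)), (X : Polynomial ℤ) ^ des w := by
  rw [Finset.mul_sum]
  exact Finset.sum_congr rfl (fun w _ => innerSumAux w)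
end
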